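/- Let 𝔤 be a finite-dimensional Lie algebra with a nondegenerate symmetric bilinear form g, and suppose x₀ ≠ 0 is an idempotent of the Euler–Arnold equation, i.e. ad_{x₀}^† x₀ = x₀ where † is the g-adjoint. Then ad_{x₀} has an eigenvector with eigenvalue 1: there exists y₀ ≠ 0 with [x₀, y₀] = y₀. -/
import Mathlib


/-- Let `𝔤` be a finite-dimensional real Lie algebra with a
nondegenerate symmetric bilinear form `g`, and let `x₀ ≠ 0` be an idempotent of the
Euler–Arnold equation, i.e. `ad_{x₀}^† x₀ = x₀`, which unfolds (via the definition
`g(ad_{x₀}^† u, v) = g(u, ⁅x₀, v⁆)`) to `g(x₀, ⁅x₀, y⁆) = g(x₀, y)` for all `y`.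
Then `ad_{x₀}` has an eigenvector with eigenvalue `1`: there is `y₀ ≠ 0` with
`⁅x₀, y₀⁆ = y₀`. -/
theorem stmt15 {𝔤 : Type*} [LieRing 𝔤] [LieAlgebra ℝ 𝔤] [FiniteDimensional ℝ 𝔤]
    (g : 𝔤 →ₗ[ℝ] 𝔤 →ₗ[ℝ] ℝ)
    (hg_symm : ∀ u v : 𝔤, g u v = g v u)
    (hg_nondeg : ∀ u : 𝔤, (∀ v : 𝔤, g u v = 0) → u = 0)
    (x₀ : 𝔤) (hx₀ : x₀ ≠ 0)
    (hidem : ∀ y : 𝔤, g x₀ ⁅x₀, y⁆ = g x₀ y) :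
    ∃ y₀ : 𝔤, y₀ ≠ 0 ∧ ⁅x₀, y₀⁆ = y₀ := by
  -- The map T y = y - ⁅x₀, y⁆ maps everything into the kernel of g x₀,
  -- hence is not surjective (since g x₀ ≠ 0), hence not injective.
  set T : 𝔤 →ₗ[ℝ] 𝔤 := LinearMap.id - (LieAlgebra.ad ℝ 𝔤 x₀) with hT
  have hTval : ∀ y, T y = y - ⁅x₀, y⁆ := fun y => rfl
  have hnotsurj : ¬ Function.Surjective T := by
    intro hsurj
    -- there is v with g x₀ v ≠ 0
    have : ∃ v, g x₀ v ≠ 0 := by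
      by_contra h
      push_neg at h
      exact hx₀ (hg_nondeg x₀ h)
    obtain ⟨v, hv⟩ := this
    obtain ⟨y, hy⟩ := hsurj v
    apply hv
    rw [← hy, hTval, map_sub, hidem, sub_self]
  have hnotinj : ¬ Function.Injective T := by
    intro hinj
    exact hnotsurj ((LinearMap.injective_iff_surjective).mp hinj)
  rw [injective_iff_map_eq_zero] at hnotinj
  push_neg at hnotinj
  obtain ⟨y₀, hy0, hy1⟩ := hnotinj
  refine ⟨y₀, hy1, ?_⟩
  have := hTval y₀
  rw [hy0] at this
  exact (sub_eq_zero.mp this.symm).symm
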